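/- arXiv:1605.04433 — 4 statements merged into one kernel-verified Lean document; each statement's English description precedes it below -/
import Mathlib

section
/- With Λ and E₇ ⊂ E₈ as above, for any root α of E₇ one has Ω(−α) = {δ − λ : λ ∈ Ω(α)}, where Ω(β) = {λ ∈ Λ : λ − β ∈ Λ} and δ is the highest root of E₈. -/
open Finset

/-- Ambient 8-dimensional rational space in which E₈ is realized. -/
abbrev V8 : Type := Fin 8 → ℚ

/-- The standard inner product on `V8`; roots of E₈ have squared length 2 in it. -/
def stdInner (x y : V8) : ℚ := ∑ i, x i * y i

/-- The inner product normalized so that all roots of E₈ have length 1. -/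
def nip (x y : V8) : ℚ := stdInner x y / 2

/-- `v` is a root of E₈ in the standard coordinate realization:
either all coordinates are integers, or all are half-odd-integers;
the squared length is 2 and the coordinate sum is an even integer. -/
def IsE8Root (v : V8) : Prop :=
  stdInner v v = 2 ∧
  ((∀ i, ∃ n : ℤ, v i = n) ∨ (∀ i, ∃ n : ℤ, v i = n + 1/2)) ∧
  (∃ n : ℤ, (∑ i, v i) = 2 * n)

/-- The simple roots α₁,…,α₈ of E₈ in Bourbaki numbering (index `i` is αᵢ₊₁). -/
def simpleRoot : Fin 8 → V8 :=
  ![![1/2, -1/2, -1/2, -1/2, -1/2, -1/2, -1/2, 1/2],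
    ![1, 1, 0, 0, 0, 0, 0, 0],
    ![-1, 1, 0, 0, 0, 0, 0, 0],
    ![0, -1, 1, 0, 0, 0, 0, 0],
    ![0, 0, -1, 1, 0, 0, 0, 0],
    ![0, 0, 0, -1, 1, 0, 0, 0],
    ![0, 0, 0, 0, -1, 1, 0, 0],
    ![0, 0, 0, 0, 0, -1, 1, 0]]

/-- `c` is the coordinate vector of `v` in the basis of simple roots of E₈. -/
def HasCoords (v : V8) (c : Fin 8 → ℚ) : Prop := v = ∑ i, c i • simpleRoot i

/-- The set Λ of roots of E₈ whose α₈-coefficient equals 1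
(the weights of the 56-dimensional representation of E₇). -/
def LambdaE7 : Set V8 := {v | IsE8Root v ∧ ∃ c, HasCoords v c ∧ c 7 = 1}

/-- E₇ embedded in E₈ as the set of roots with α₈-coefficient 0. -/
def E7 : Set V8 := {v | IsE8Root v ∧ ∃ c, HasCoords v c ∧ c 7 = 0}

/-- The highest root δ of E₈ (equal to e₇ + e₈ in standard coordinates). -/
def deltaE8 : V8 := ![0, 0, 0, 0, 0, 0, 1, 1]

/-- For a root α of E₇, the maximal square Ω(α) = {λ ∈ Λ : λ − α ∈ Λ}. -/
def Omega (a : V8) : Set V8 := {l | l ∈ LambdaE7 ∧ l - a ∈ LambdaE7}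

@[simp] lemma cons_val_five {α} {m : ℕ} (x : α) (u : Fin (m+5) → α) :
    Matrix.vecCons x u 5 =
      Matrix.vecHead (Matrix.vecTail (Matrix.vecTail (Matrix.vecTail (Matrix.vecTail u)))) := rfl
@[simp] lemma cons_val_six {α} {m : ℕ} (x : α) (u : Fin (m+6) → α) :
    Matrix.vecCons x u 6 =
      Matrix.vecHead (Matrix.vecTail (Matrix.vecTail (Matrix.vecTail (Matrix.vecTail (Matrix.vecTail u))))) := rfl
@[simp] lemma cons_val_seven {α} {m : ℕ} (x : α) (u : Fin (m+7) → α) :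
    Matrix.vecCons x u 7 =
      Matrix.vecHead (Matrix.vecTail (Matrix.vecTail (Matrix.vecTail (Matrix.vecTail (Matrix.vecTail (Matrix.vecTail u)))))) := rfl

lemma hasCoords_sub {u v : V8} {c d : Fin 8 → ℚ} (hu : HasCoords u c) (hv : HasCoords v d) :
    HasCoords (u - v) (c - d) := by
  unfold HasCoords at *
  rw [hu, hv, ← Finset.sum_sub_distrib]
  simp [sub_smul]

lemma delta_coords : HasCoords deltaE8 ![2, 3, 4, 6, 5, 4, 3, 2] := by
  unfold HasCoords
  funext j
  simp only [Finset.sum_apply, Pi.smul_apply, Fin.sum_univ_eight, smul_eq_mul]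
  fin_cases j <;> simp [simpleRoot, deltaE8] <;> norm_num

lemma delta_int : ∀ i, ∃ m : ℤ, deltaE8 i = m := by
  intro i
  fin_cases i
  exacts [⟨0, by norm_num [deltaE8]⟩, ⟨0, by norm_num [deltaE8]⟩, ⟨0, by norm_num [deltaE8]⟩,
    ⟨0, by norm_num [deltaE8]⟩, ⟨0, by norm_num [deltaE8]⟩, ⟨0, by norm_num [deltaE8]⟩,
    ⟨1, by norm_num [deltaE8]⟩, ⟨1, by norm_num [deltaE8]⟩]

lemma mem_lambda_sub {v : V8} (hv : v ∈ LambdaE7) : deltaE8 - v ∈ LambdaE7 := by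
  obtain ⟨⟨hlen, hint, n, hsum⟩, c, hc, hc7⟩ := hv
  have h6 : v 6 = -(c 0) / 2 + c 7 := by
    have := congrFun hc 6
    simp only [Finset.sum_apply, Pi.smul_apply, Fin.sum_univ_eight, smul_eq_mul] at this
    rw [this]; simp [simpleRoot]; ring
  have h7 : v 7 = c 0 / 2 := by
    have := congrFun hc 7
    simp only [Finset.sum_apply, Pi.smul_apply, Fin.sum_univ_eight, smul_eq_mul] at this
    rw [this]; simp [simpleRoot]; ring
  have hdv : stdInner deltaE8 v = 1 := by
    have : stdInner deltaE8 v = v 6 + v 7 := by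
      simp [stdInner, Fin.sum_univ_eight, deltaE8]
    rw [this, h6, h7, hc7]; ring
  refine ⟨⟨?_, ?_, ?_⟩, ?_⟩
  · have hexp : stdInner (deltaE8 - v) (deltaE8 - v) =
        stdInner deltaE8 deltaE8 - 2 * stdInner deltaE8 v + stdInner v v := by
      simp only [stdInner, Fin.sum_univ_eight, Pi.sub_apply]; ring
    have hdd : stdInner deltaE8 deltaE8 = 2 := by
      simp [stdInner, Fin.sum_univ_eight, deltaE8]; norm_num
    rw [hexp, hdd, hdv, hlen]; ring
  · rcases hint with h | h
    · left
      intro i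
      obtain ⟨m, hm⟩ := delta_int i
      obtain ⟨k, hk⟩ := h i
      exact ⟨m - k, by simp [Pi.sub_apply, hm, hk]⟩
    · right
      intro i
      obtain ⟨m, hm⟩ := delta_int i
      obtain ⟨k, hk⟩ := h i
      refine ⟨m - k - 1, ?_⟩
      simp only [Pi.sub_apply, hm, hk]
      push_cast
      ring
  · refine ⟨1 - n, ?_⟩
    have hds : (∑ i, deltaE8 i) = 2 := by simp [Fin.sum_univ_eight, deltaE8]; norm_num
    have : (∑ i, (deltaE8 - v) i) = (∑ i, deltaE8 i) - ∑ i, v i := by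
      simp [Finset.sum_sub_distrib]
    rw [this, hds, hsum]; push_cast; ring
  · refine ⟨![2, 3, 4, 6, 5, 4, 3, 2] - c, hasCoords_sub delta_coords hc, ?_⟩
    simp [Pi.sub_apply, hc7]
    norm_num

/-- for any root α of E₇ one has Ω(−α) = {δ − λ : λ ∈ Ω(α)}. -/
theorem omega_neg :
    ∀ a ∈ E7, Omega (-a) = (fun l => deltaE8 - l) '' (Omega a) := by
  intro a _
  ext m
  constructor
  · rintro ⟨hm, hm2⟩
    refine ⟨deltaE8 - m, ⟨mem_lambda_sub hm, ?_⟩, by simp⟩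
    have h := mem_lambda_sub hm2
    have he : deltaE8 - (m - -a) = deltaE8 - m - a := by abel
    rwa [he] at h
  · rintro ⟨l, ⟨hl, hl2⟩, rfl⟩
    refine ⟨mem_lambda_sub hl, ?_⟩
    have h := mem_lambda_sub hl2
    have he : deltaE8 - (l - a) = deltaE8 - l - -a := by abel
    rwa [he] at h
end

section
/- Let Λ be the set of roots of E₈ with α₈-coefficient 1, and define the distance d(λ,μ) between λ,μ ∈ Λ by: d = 0 if (λ,μ) = 1, d = 1 if (λ,μ) = 1/2, d = 2 if (λ,μ) = 0, d = 3 if (λ,μ) = −1/2 (inner product normalized so all roots have length 1). Then for each λ ∈ Λ: the number of μ with d(λ,μ)=1 is 27, with d(λ,μ)=2 is 27, and with d(λ,μ)=3 is 1. -/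
open Finset

/-! ### Auxiliary definitions and lemmas -/

/-- Map a doubled integer vector to `V8`. -/
def half (u : Fin 8 → ℤ) : V8 := fun i => (u i : ℚ) / 2

/-- Doubled coordinates of the 56 elements of Λ. -/
def L2 : List (Fin 8 → ℤ) := [
![2, 0, 0, 0, 0, 0, 2, 0],
  ![2, 0, 0, 0, 0, 0, 0, 2],
  ![-2, 0, 0, 0, 0, 0, 2, 0],
  ![-2, 0, 0, 0, 0, 0, 0, 2],
  ![0, 2, 0, 0, 0, 0, 2, 0],
  ![0, 2, 0, 0, 0, 0, 0, 2],
  ![0, -2, 0, 0, 0, 0, 2, 0],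
  ![0, -2, 0, 0, 0, 0, 0, 2],
  ![0, 0, 2, 0, 0, 0, 2, 0],
  ![0, 0, 2, 0, 0, 0, 0, 2],
  ![0, 0, -2, 0, 0, 0, 2, 0],
  ![0, 0, -2, 0, 0, 0, 0, 2],
  ![0, 0, 0, 2, 0, 0, 2, 0],
  ![0, 0, 0, 2, 0, 0, 0, 2],
  ![0, 0, 0, -2, 0, 0, 2, 0],
  ![0, 0, 0, -2, 0, 0, 0, 2],
  ![0, 0, 0, 0, 2, 0, 2, 0],
  ![0, 0, 0, 0, 2, 0, 0, 2],
  ![0, 0, 0, 0, -2, 0, 2, 0],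
  ![0, 0, 0, 0, -2, 0, 0, 2],
  ![0, 0, 0, 0, 0, 2, 2, 0],
  ![0, 0, 0, 0, 0, 2, 0, 2],
  ![0, 0, 0, 0, 0, -2, 2, 0],
  ![0, 0, 0, 0, 0, -2, 0, 2],
  ![1, 1, 1, 1, 1, 1, 1, 1],
  ![1, 1, 1, 1, -1, -1, 1, 1],
  ![1, 1, 1, -1, 1, -1, 1, 1],
  ![1, 1, 1, -1, -1, 1, 1, 1],
  ![1, 1, -1, 1, 1, -1, 1, 1],
  ![1, 1, -1, 1, -1, 1, 1, 1],
  ![1, 1, -1, -1, 1, 1, 1, 1],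
  ![1, 1, -1, -1, -1, -1, 1, 1],
  ![1, -1, 1, 1, 1, -1, 1, 1],
  ![1, -1, 1, 1, -1, 1, 1, 1],
  ![1, -1, 1, -1, 1, 1, 1, 1],
  ![1, -1, 1, -1, -1, -1, 1, 1],
  ![1, -1, -1, 1, 1, 1, 1, 1],
  ![1, -1, -1, 1, -1, -1, 1, 1],
  ![1, -1, -1, -1, 1, -1, 1, 1],
  ![1, -1, -1, -1, -1, 1, 1, 1],
  ![-1, 1, 1, 1, 1, -1, 1, 1],
  ![-1, 1, 1, 1, -1, 1, 1, 1],
  ![-1, 1, 1, -1, 1, 1, 1, 1],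
  ![-1, 1, 1, -1, -1, -1, 1, 1],
  ![-1, 1, -1, 1, 1, 1, 1, 1],
  ![-1, 1, -1, 1, -1, -1, 1, 1],
  ![-1, 1, -1, -1, 1, -1, 1, 1],
  ![-1, 1, -1, -1, -1, 1, 1, 1],
  ![-1, -1, 1, 1, 1, 1, 1, 1],
  ![-1, -1, 1, 1, -1, -1, 1, 1],
  ![-1, -1, 1, -1, 1, -1, 1, 1],
  ![-1, -1, 1, -1, -1, 1, 1, 1],
  ![-1, -1, -1, 1, 1, -1, 1, 1],
  ![-1, -1, -1, 1, -1, 1, 1, 1],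
  ![-1, -1, -1, -1, 1, 1, 1, 1],
  ![-1, -1, -1, -1, -1, -1, 1, 1]]

/-- The 56 elements of Λ as an explicit finset. -/
def Lam : Finset V8 := (L2.map half).toFinset

lemma half_injective : Function.Injective half := by
  intro a b h
  funext i
  have h2 := congrFun h i
  simp only [half] at h2
  have : (a i : ℚ) = b i := by linarith
  exact_mod_cast this

lemma mem_Lam {m : V8} : m ∈ Lam ↔ ∃ w ∈ L2, half w = m := by
  simp [Lam]

/-- Coordinates in the simple-root basis, as explicit linear functions of `v`. -/
def coordMap (v : V8) : Fin 8 → ℚ :=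
  ![2 * v 7,
    (v 0 + v 1 + v 2 + v 3 + v 4 + v 5 + v 6 + 5 * v 7) / 2,
    (-v 0 + v 1 + v 2 + v 3 + v 4 + v 5 + v 6 + 7 * v 7) / 2,
    v 2 + v 3 + v 4 + v 5 + v 6 + 5 * v 7,
    v 3 + v 4 + v 5 + v 6 + 4 * v 7,
    v 4 + v 5 + v 6 + 3 * v 7,
    v 5 + v 6 + 2 * v 7,
    v 6 + v 7]

lemma funext8 {α : Type*} {f g : Fin 8 → α} (h0 : f 0 = g 0) (h1 : f 1 = g 1)
    (h2 : f 2 = g 2) (h3 : f 3 = g 3) (h4 : f 4 = g 4) (h5 : f 5 = g 5)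
    (h6 : f 6 = g 6) (h7 : f 7 = g 7) : f = g := by
  funext j; fin_cases j
  exacts [h0, h1, h2, h3, h4, h5, h6, h7]

lemma sum_coord_apply (c : Fin 8 → ℚ) (j : Fin 8) :
    (∑ i, c i • simpleRoot i) j = ∑ i, c i * simpleRoot i j := by
  simp [Finset.sum_apply]

lemma hasCoords_coordMap (v : V8) : HasCoords v (coordMap v) := by
  unfold HasCoords
  apply funext8 <;>
  · rw [sum_coord_apply]
    simp only [Fin.sum_univ_eight,
      show simpleRoot 0 0 = (1/2 : ℚ) from rfl,
      show simpleRoot 0 1 = (-1/2 : ℚ) from rfl,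
      show simpleRoot 0 2 = (-1/2 : ℚ) from rfl,
      show simpleRoot 0 3 = (-1/2 : ℚ) from rfl,
      show simpleRoot 0 4 = (-1/2 : ℚ) from rfl,
      show simpleRoot 0 5 = (-1/2 : ℚ) from rfl,
      show simpleRoot 0 6 = (-1/2 : ℚ) from rfl,
      show simpleRoot 0 7 = (1/2 : ℚ) from rfl,
      show simpleRoot 1 0 = (1 : ℚ) from rfl,
      show simpleRoot 1 1 = (1 : ℚ) from rfl,
      show simpleRoot 1 2 = (0 : ℚ) from rfl,
      show simpleRoot 1 3 = (0 : ℚ) from rfl,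
      show simpleRoot 1 4 = (0 : ℚ) from rfl,
      show simpleRoot 1 5 = (0 : ℚ) from rfl,
      show simpleRoot 1 6 = (0 : ℚ) from rfl,
      show simpleRoot 1 7 = (0 : ℚ) from rfl,
      show simpleRoot 2 0 = (-1 : ℚ) from rfl,
      show simpleRoot 2 1 = (1 : ℚ) from rfl,
      show simpleRoot 2 2 = (0 : ℚ) from rfl,
      show simpleRoot 2 3 = (0 : ℚ) from rfl,
      show simpleRoot 2 4 = (0 : ℚ) from rfl,
      show simpleRoot 2 5 = (0 : ℚ) from rfl,
      show simpleRoot 2 6 = (0 : ℚ) from rfl,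
      show simpleRoot 2 7 = (0 : ℚ) from rfl,
      show simpleRoot 3 0 = (0 : ℚ) from rfl,
      show simpleRoot 3 1 = (-1 : ℚ) from rfl,
      show simpleRoot 3 2 = (1 : ℚ) from rfl,
      show simpleRoot 3 3 = (0 : ℚ) from rfl,
      show simpleRoot 3 4 = (0 : ℚ) from rfl,
      show simpleRoot 3 5 = (0 : ℚ) from rfl,
      show simpleRoot 3 6 = (0 : ℚ) from rfl,
      show simpleRoot 3 7 = (0 : ℚ) from rfl,
      show simpleRoot 4 0 = (0 : ℚ) from rfl,
      show simpleRoot 4 1 = (0 : ℚ) from rfl,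
      show simpleRoot 4 2 = (-1 : ℚ) from rfl,
      show simpleRoot 4 3 = (1 : ℚ) from rfl,
      show simpleRoot 4 4 = (0 : ℚ) from rfl,
      show simpleRoot 4 5 = (0 : ℚ) from rfl,
      show simpleRoot 4 6 = (0 : ℚ) from rfl,
      show simpleRoot 4 7 = (0 : ℚ) from rfl,
      show simpleRoot 5 0 = (0 : ℚ) from rfl,
      show simpleRoot 5 1 = (0 : ℚ) from rfl,
      show simpleRoot 5 2 = (0 : ℚ) from rfl,
      show simpleRoot 5 3 = (-1 : ℚ) from rfl,
      show simpleRoot 5 4 = (1 : ℚ) from rfl,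
      show simpleRoot 5 5 = (0 : ℚ) from rfl,
      show simpleRoot 5 6 = (0 : ℚ) from rfl,
      show simpleRoot 5 7 = (0 : ℚ) from rfl,
      show simpleRoot 6 0 = (0 : ℚ) from rfl,
      show simpleRoot 6 1 = (0 : ℚ) from rfl,
      show simpleRoot 6 2 = (0 : ℚ) from rfl,
      show simpleRoot 6 3 = (0 : ℚ) from rfl,
      show simpleRoot 6 4 = (-1 : ℚ) from rfl,
      show simpleRoot 6 5 = (1 : ℚ) from rfl,
      show simpleRoot 6 6 = (0 : ℚ) from rfl,
      show simpleRoot 6 7 = (0 : ℚ) from rfl,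
      show simpleRoot 7 0 = (0 : ℚ) from rfl,
      show simpleRoot 7 1 = (0 : ℚ) from rfl,
      show simpleRoot 7 2 = (0 : ℚ) from rfl,
      show simpleRoot 7 3 = (0 : ℚ) from rfl,
      show simpleRoot 7 4 = (0 : ℚ) from rfl,
      show simpleRoot 7 5 = (-1 : ℚ) from rfl,
      show simpleRoot 7 6 = (1 : ℚ) from rfl,
      show simpleRoot 7 7 = (0 : ℚ) from rfl,
      show coordMap v 0 = 2 * v 7 from rfl,
      show coordMap v 1 = (v 0 + v 1 + v 2 + v 3 + v 4 + v 5 + v 6 + 5 * v 7) / 2 from rfl,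
      show coordMap v 2 = (-v 0 + v 1 + v 2 + v 3 + v 4 + v 5 + v 6 + 7 * v 7) / 2 from rfl,
      show coordMap v 3 = v 2 + v 3 + v 4 + v 5 + v 6 + 5 * v 7 from rfl,
      show coordMap v 4 = v 3 + v 4 + v 5 + v 6 + 4 * v 7 from rfl,
      show coordMap v 5 = v 4 + v 5 + v 6 + 3 * v 7 from rfl,
      show coordMap v 6 = v 5 + v 6 + 2 * v 7 from rfl,
      show coordMap v 7 = v 6 + v 7 from rfl]
    ring

lemma coord7_eq (v : V8) (c : Fin 8 → ℚ) (hc : HasCoords v c) : v 6 + v 7 = c 7 := by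
  unfold HasCoords at hc
  have h6 := congrFun hc 6
  have h7 := congrFun hc 7
  rw [sum_coord_apply] at h6 h7
  simp only [Fin.sum_univ_eight,
      show simpleRoot 0 0 = (1/2 : ℚ) from rfl,
      show simpleRoot 0 1 = (-1/2 : ℚ) from rfl,
      show simpleRoot 0 2 = (-1/2 : ℚ) from rfl,
      show simpleRoot 0 3 = (-1/2 : ℚ) from rfl,
      show simpleRoot 0 4 = (-1/2 : ℚ) from rfl,
      show simpleRoot 0 5 = (-1/2 : ℚ) from rfl,
      show simpleRoot 0 6 = (-1/2 : ℚ) from rfl,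
      show simpleRoot 0 7 = (1/2 : ℚ) from rfl,
      show simpleRoot 1 0 = (1 : ℚ) from rfl,
      show simpleRoot 1 1 = (1 : ℚ) from rfl,
      show simpleRoot 1 2 = (0 : ℚ) from rfl,
      show simpleRoot 1 3 = (0 : ℚ) from rfl,
      show simpleRoot 1 4 = (0 : ℚ) from rfl,
      show simpleRoot 1 5 = (0 : ℚ) from rfl,
      show simpleRoot 1 6 = (0 : ℚ) from rfl,
      show simpleRoot 1 7 = (0 : ℚ) from rfl,
      show simpleRoot 2 0 = (-1 : ℚ) from rfl,
      show simpleRoot 2 1 = (1 : ℚ) from rfl,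
      show simpleRoot 2 2 = (0 : ℚ) from rfl,
      show simpleRoot 2 3 = (0 : ℚ) from rfl,
      show simpleRoot 2 4 = (0 : ℚ) from rfl,
      show simpleRoot 2 5 = (0 : ℚ) from rfl,
      show simpleRoot 2 6 = (0 : ℚ) from rfl,
      show simpleRoot 2 7 = (0 : ℚ) from rfl,
      show simpleRoot 3 0 = (0 : ℚ) from rfl,
      show simpleRoot 3 1 = (-1 : ℚ) from rfl,
      show simpleRoot 3 2 = (1 : ℚ) from rfl,
      show simpleRoot 3 3 = (0 : ℚ) from rfl,
      show simpleRoot 3 4 = (0 : ℚ) from rfl,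
      show simpleRoot 3 5 = (0 : ℚ) from rfl,
      show simpleRoot 3 6 = (0 : ℚ) from rfl,
      show simpleRoot 3 7 = (0 : ℚ) from rfl,
      show simpleRoot 4 0 = (0 : ℚ) from rfl,
      show simpleRoot 4 1 = (0 : ℚ) from rfl,
      show simpleRoot 4 2 = (-1 : ℚ) from rfl,
      show simpleRoot 4 3 = (1 : ℚ) from rfl,
      show simpleRoot 4 4 = (0 : ℚ) from rfl,
      show simpleRoot 4 5 = (0 : ℚ) from rfl,
      show simpleRoot 4 6 = (0 : ℚ) from rfl,
      show simpleRoot 4 7 = (0 : ℚ) from rfl,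
      show simpleRoot 5 0 = (0 : ℚ) from rfl,
      show simpleRoot 5 1 = (0 : ℚ) from rfl,
      show simpleRoot 5 2 = (0 : ℚ) from rfl,
      show simpleRoot 5 3 = (-1 : ℚ) from rfl,
      show simpleRoot 5 4 = (1 : ℚ) from rfl,
      show simpleRoot 5 5 = (0 : ℚ) from rfl,
      show simpleRoot 5 6 = (0 : ℚ) from rfl,
      show simpleRoot 5 7 = (0 : ℚ) from rfl,
      show simpleRoot 6 0 = (0 : ℚ) from rfl,
      show simpleRoot 6 1 = (0 : ℚ) from rfl,
      show simpleRoot 6 2 = (0 : ℚ) from rfl,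
      show simpleRoot 6 3 = (0 : ℚ) from rfl,
      show simpleRoot 6 4 = (-1 : ℚ) from rfl,
      show simpleRoot 6 5 = (1 : ℚ) from rfl,
      show simpleRoot 6 6 = (0 : ℚ) from rfl,
      show simpleRoot 6 7 = (0 : ℚ) from rfl,
      show simpleRoot 7 0 = (0 : ℚ) from rfl,
      show simpleRoot 7 1 = (0 : ℚ) from rfl,
      show simpleRoot 7 2 = (0 : ℚ) from rfl,
      show simpleRoot 7 3 = (0 : ℚ) from rfl,
      show simpleRoot 7 4 = (0 : ℚ) from rfl,
      show simpleRoot 7 5 = (-1 : ℚ) from rfl,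
      show simpleRoot 7 6 = (1 : ℚ) from rfl,
      show simpleRoot 7 7 = (0 : ℚ) from rfl] at h6 h7
  rw [h6, h7]; ring

lemma one_le_odd_sq (m : ℤ) : 1 ≤ (2 * m + 1) ^ 2 := by
  rcases le_or_gt 0 m with h | h <;> nlinarith

lemma subset_lambda : ∀ v ∈ Lam, v ∈ LambdaE7 := by
  intro v hv
  obtain ⟨u, hu, rfl⟩ := mem_Lam.mp hv
  have all : ∀ u' ∈ L2, (∑ i, (u' i) ^ 2 = 8) ∧
      ((∀ i, u' i % 2 = 0) ∨ (∀ i, u' i % 2 = 1)) ∧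
      ((∑ i, u' i) % 4 = 0) ∧ (u' 6 + u' 7 = 2) := by decide
  obtain ⟨h8, hpar, h4, h67⟩ := all u hu
  have hq : ∑ i, ((u i : ℚ)) ^ 2 = 8 := by exact_mod_cast h8
  refine ⟨⟨?_, ?_, ?_⟩, coordMap (half u), hasCoords_coordMap _, ?_⟩
  · unfold stdInner half
    have e : ∑ i, ((u i : ℚ) / 2) * ((u i : ℚ) / 2) = (∑ i, ((u i : ℚ)) ^ 2) / 4 := by
      rw [Finset.sum_div]; exact Finset.sum_congr rfl fun i _ => by ring
    rw [e, hq]; norm_num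
  · rcases hpar with h | h
    · exact Or.inl fun i => ⟨u i / 2, by
        obtain ⟨k, hk⟩ : ∃ k, u i = 2 * k := ⟨u i / 2, by have := h i; omega⟩
        show (u i : ℚ) / 2 = ((u i / 2 : ℤ) : ℚ)
        rw [hk]
        have h2 : (2 * k : ℤ) / 2 = k := by omega
        rw [h2]; push_cast; ring⟩
    · exact Or.inr fun i => ⟨(u i - 1) / 2, by
        obtain ⟨k, hk⟩ : ∃ k, u i = 2 * k + 1 := ⟨(u i - 1) / 2, by have := h i; omega⟩
        show (u i : ℚ) / 2 = (((u i - 1) / 2 : ℤ) : ℚ) + 1 / 2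
        rw [hk]
        have h2 : (2 * k + 1 - 1 : ℤ) / 2 = k := by omega
        rw [h2]; push_cast; ring⟩
  · obtain ⟨s, hs⟩ : ∃ s, ∑ i, u i = 4 * s := ⟨(∑ i, u i) / 4, by omega⟩
    refine ⟨s, ?_⟩
    have e : ∑ i, half u i = ((∑ i, u i : ℤ) : ℚ) / 2 := by
      unfold half; rw [← Finset.sum_div]; push_cast; ring
    rw [e, hs]; push_cast; ring
  · show half u 6 + half u 7 = 1
    have h2 : (u 6 : ℚ) + (u 7 : ℚ) = 2 := by exact_mod_cast h67
    unfold half; linarith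

set_option maxRecDepth 100000 in
set_option synthInstance.maxSize 2000 in
set_option maxHeartbeats 1000000 in
lemma lambda_subset : ∀ v ∈ LambdaE7, v ∈ Lam := by
  rintro v ⟨⟨hlen, hint, hsum⟩, c, hc, hc7⟩
  have h67 : v 6 + v 7 = 1 := by rw [coord7_eq v c hc, hc7]
  unfold stdInner at hlen
  rcases hint with h | h
  · choose n hn using h
    have hv : v = fun i => (n i : ℚ) := funext hn
    subst hv
    have hlen' : ∑ i, (n i) ^ 2 = 2 := by
      have e : ((∑ i, (n i) ^ 2 : ℤ) : ℚ) = 2 := by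
        push_cast
        rw [← hlen]; exact Finset.sum_congr rfl fun i _ => by ring
      exact_mod_cast e
    have hb : ∀ i, -1 ≤ n i ∧ n i ≤ 1 := by
      intro i
      have h1 : (n i) ^ 2 ≤ 2 := by
        rw [← hlen']
        exact Finset.single_le_sum (fun j _ => sq_nonneg (n j)) (Finset.mem_univ i)
      constructor <;> nlinarith
    have h67' : n 6 + n 7 = 1 := by
      exact_mod_cast show ((n 6 : ℚ)) + ((n 7 : ℚ)) = 1 from h67
    set S := Finset.univ.filter (fun i => n i ≠ 0) with hSdef
    have hsq1 : ∀ i ∈ S, (n i) ^ 2 = 1 := by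
      intro i hi
      have hne : n i ≠ 0 := by
        simpa [hSdef] using hi
      have := hb i
      have : n i = -1 ∨ n i = 1 := by omega
      rcases this with h | h <;> rw [h] <;> norm_num
    have hsum_eq : ∑ i ∈ S, (n i) ^ 2 = 2 := by
      rw [← hlen']
      apply Finset.sum_subset (Finset.filter_subset _ _)
      intro x _ hxS
      have hx0 : n x = 0 := by simpa [hSdef] using hxS
      rw [hx0]; ring
    have hcard : S.card = 2 := by
      have e : ∑ i ∈ S, (n i) ^ 2 = (S.card : ℤ) := by
        rw [Finset.sum_congr rfl hsq1]; simp
      rw [e] at hsum_eq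
      exact_mod_cast hsum_eq
    obtain ⟨a, b, hab, hSab⟩ := Finset.card_eq_two.mp hcard
    have hout : ∀ i, i ≠ a → i ≠ b → n i = 0 := by
      intro i hia hib
      by_contra hni
      have : i ∈ S := by simp [hSdef, hni]
      rw [hSab] at this
      simp only [Finset.mem_insert, Finset.mem_singleton] at this
      tauto
    have hfun : ∀ i, n i = if i = a then n a else if i = b then n b else 0 := by
      intro i
      by_cases h1 : i = a
      · subst h1; simp
      · by_cases h2 : i = b
        · subst h2; simp [h1]
        · simp [h1, h2, hout i h1 h2]
    have hna : n a ≠ 0 := by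
      have : a ∈ S := by rw [hSab]; simp
      simpa [hSdef] using this
    have hnb : n b ≠ 0 := by
      have : b ∈ S := by rw [hSab]; simp
      simpa [hSdef] using this
    have key : ∀ a' b' : Fin 8, ∀ sa ∈ Finset.Icc (-1 : ℤ) 1, ∀ sb ∈ Finset.Icc (-1 : ℤ) 1,
        a' ≠ b' → sa ≠ 0 → sb ≠ 0 →
        ((if (6 : Fin 8) = a' then sa else if (6 : Fin 8) = b' then sb else 0) +
         (if (7 : Fin 8) = a' then sa else if (7 : Fin 8) = b' then sb else 0) = 1) →
        (fun i => if i = a' then 2 * sa else if i = b' then 2 * sb else 0) ∈ L2 := by decide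
    have hcond : (if (6 : Fin 8) = a then n a else if (6 : Fin 8) = b then n b else 0) +
        (if (7 : Fin 8) = a then n a else if (7 : Fin 8) = b then n b else 0) = 1 := by
      rw [← hfun 6, ← hfun 7]; exact h67'
    refine mem_Lam.mpr ⟨fun i => if i = a then 2 * n a else if i = b then 2 * n b else 0,
      key a b (n a) (by simp [Finset.mem_Icc, (hb a).1, (hb a).2])
        (n b) (by simp [Finset.mem_Icc, (hb b).1, (hb b).2]) hab hna hnb hcond, ?_⟩
    funext i
    show ((if i = a then 2 * n a else if i = b then 2 * n b else 0 : ℤ) : ℚ) / 2 = (n i : ℚ)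
    rw [hfun i]
    split_ifs <;> push_cast <;> ring
  · choose n hn using h
    have hv : v = fun i => (n i : ℚ) + 1 / 2 := funext hn
    subst hv
    have hlen' : ∑ i, (2 * n i + 1) ^ 2 = 8 := by
      have e : ((∑ i, (2 * n i + 1) ^ 2 : ℤ) : ℚ) = 8 := by
        push_cast
        have e2 : ∑ i, (2 * (n i : ℚ) + 1) ^ 2 =
            4 * ∑ i, ((n i : ℚ) + 1 / 2) * ((n i : ℚ) + 1 / 2) := by
          rw [Finset.mul_sum]; exact Finset.sum_congr rfl fun i _ => by ring
        rw [e2, hlen]; norm_num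
      exact_mod_cast e
    have hb : ∀ i, n i ∈ Finset.Icc (-1 : ℤ) 0 := by
      intro i
      have hcard : (Finset.univ.erase i).card = 7 := by
        rw [Finset.card_erase_of_mem (Finset.mem_univ i)]; simp
      have hrest : (7 : ℤ) ≤ ∑ j ∈ Finset.univ.erase i, (2 * n j + 1) ^ 2 := by
        have h0 : ∑ j ∈ Finset.univ.erase i, (1 : ℤ) ≤
            ∑ j ∈ Finset.univ.erase i, (2 * n j + 1) ^ 2 :=
          Finset.sum_le_sum fun j _ => one_le_odd_sq (n j)
        simpa [Finset.sum_const, hcard] using h0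
      rw [← Finset.add_sum_erase _ _ (Finset.mem_univ i)] at hlen'
      have h1 : (2 * n i + 1) ^ 2 ≤ 1 := by omega
      simp only [Finset.mem_Icc]
      constructor <;> nlinarith
    have h67' : n 6 + n 7 = 0 := by
      have e : (n 6 : ℚ) + 1 / 2 + ((n 7 : ℚ) + 1 / 2) = 1 := h67
      have h2 : (n 6 : ℚ) + (n 7 : ℚ) = 0 := by linarith
      exact_mod_cast h2
    have hev : (∑ i, n i) % 2 = 0 := by
      obtain ⟨m, hm⟩ := hsum
      have e : ((∑ i, n i : ℤ) : ℚ) + 4 = 2 * m := by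
        push_cast
        have e2 : ∑ i, ((n i : ℚ) + 1 / 2) = (∑ i, (n i : ℚ)) + 4 := by
          rw [Finset.sum_add_distrib]; norm_num
        rw [← e2]
        exact hm
      have e3 : (∑ i, n i : ℤ) + 4 = 2 * m := by exact_mod_cast e
      omega
    have key : ∀ m ∈ Fintype.piFinset (fun _ : Fin 8 => Finset.Icc (-1 : ℤ) 0),
        (m 6 + m 7 = 0 ∧ (∑ i, m i) % 2 = 0) →
        (fun i => 2 * m i + 1) ∈ L2 := by decide
    refine mem_Lam.mpr ⟨fun i => 2 * n i + 1,
      key n (by simp [Fintype.mem_piFinset, fun i => hb i]) ⟨h67', hev⟩, ?_⟩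
    funext i
    show ((2 * n i + 1 : ℤ) : ℚ) / 2 = _
    push_cast; ring

lemma lambda_eq : LambdaE7 = ↑Lam :=
  Set.ext fun v => ⟨fun h => lambda_subset v h, fun h => subset_lambda v h⟩

lemma nip_half (u w : Fin 8 → ℤ) :
    nip (half u) (half w) = ((∑ i, u i * w i : ℤ) : ℚ) / 8 := by
  unfold nip stdInner half
  have e : ∑ i, ((u i : ℚ) / 2) * ((w i : ℚ) / 2) = (∑ i, (u i : ℚ) * (w i : ℚ)) / 4 := by
    rw [Finset.sum_div]; exact Finset.sum_congr rfl fun i _ => by ring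
  rw [e]
  push_cast
  ring

lemma nip_half_iff (u w : Fin 8 → ℤ) (k : ℤ) :
    nip (half u) (half w) = (k : ℚ) / 8 ↔ ∑ i, u i * w i = k := by
  rw [nip_half]
  constructor
  · intro h
    have h2 : ((∑ i, u i * w i : ℤ) : ℚ) = (k : ℚ) := by linarith
    exact_mod_cast h2
  · intro h; rw [h]

lemma count_eq (u : Fin 8 → ℤ) (q : ℚ) (k : ℤ) (hk : q = (k : ℚ) / 8) :
    {m | m ∈ LambdaE7 ∧ nip (half u) m = q}.ncard =
      (L2.toFinset.filter fun w => ∑ i, u i * w i = k).card := by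
  have e : {m | m ∈ LambdaE7 ∧ nip (half u) m = q} =
      ↑((L2.toFinset.filter fun w => ∑ i, u i * w i = k).image half) := by
    ext m
    simp only [Set.mem_setOf_eq, lambda_eq, Finset.mem_coe, Finset.mem_image,
      Finset.mem_filter, List.mem_toFinset, mem_Lam]
    constructor
    · rintro ⟨⟨w, hw, rfl⟩, hnip⟩
      exact ⟨w, ⟨hw, (nip_half_iff u w k).mp (by rw [← hk]; exact hnip)⟩, rfl⟩
    · rintro ⟨w, ⟨hw, hd⟩, rfl⟩
      exact ⟨⟨w, hw, rfl⟩, by rw [hk]; exact (nip_half_iff u w k).mpr hd⟩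
  rw [e, Set.ncard_coe_finset,
    Finset.card_image_of_injective _ half_injective]

/-- for each λ ∈ Λ, there are 27 weights at distance 1 (inner product 1/2),
27 at distance 2 (inner product 0), and exactly 1 at distance 3 (inner product −1/2). -/
theorem distance_counts :
    ∀ l ∈ LambdaE7,
      {m | m ∈ LambdaE7 ∧ nip l m = 1/2}.ncard = 27 ∧
      {m | m ∈ LambdaE7 ∧ nip l m = 0}.ncard = 27 ∧
      {m | m ∈ LambdaE7 ∧ nip l m = -1/2}.ncard = 1 := by
  intro l hl
  obtain ⟨u, hu, rfl⟩ := mem_Lam.mp (lambda_subset l hl)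
  have key : ∀ u' ∈ L2,
      (L2.toFinset.filter fun w => ∑ i, u' i * w i = 4).card = 27 ∧
      (L2.toFinset.filter fun w => ∑ i, u' i * w i = 0).card = 27 ∧
      (L2.toFinset.filter fun w => ∑ i, u' i * w i = -4).card = 1 := by decide
  obtain ⟨k1, k2, k3⟩ := key u hu
  refine ⟨?_, ?_, ?_⟩
  · rw [count_eq u (1/2) 4 (by norm_num), k1]
  · rw [count_eq u 0 0 (by norm_num), k2]
  · rw [count_eq u (-1/2) (-4) (by norm_num), k3]
end

section
/- Let Λ be the roots of E₈ with α₈-coefficient 1 and δ the highest root of E₈. For λ ∈ Λ, let {λ}^⊥ = {μ ∈ Λ : (λ,μ) = 0}. Then |{λ}^⊥| = 27, and for any two distinct orthogonal weights ρ, σ ∈ {λ}^⊥ with (ρ,σ)=0, there is exactly one weight τ ∈ {λ}^⊥ orthogonal to both ρ and σ. -/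
open Finset

/-! ### Auxiliary machinery -/

set_option maxHeartbeats 4000000
set_option maxRecDepth 1000000

def wts : List V8 :=
  [![1, 0, 0, 0, 0, 0, 1, 0],
   ![-1, 0, 0, 0, 0, 0, 1, 0],
   ![1, 0, 0, 0, 0, 0, 0, 1],
   ![-1, 0, 0, 0, 0, 0, 0, 1],
   ![0, 1, 0, 0, 0, 0, 1, 0],
   ![0, -1, 0, 0, 0, 0, 1, 0],
   ![0, 1, 0, 0, 0, 0, 0, 1],
   ![0, -1, 0, 0, 0, 0, 0, 1],
   ![0, 0, 1, 0, 0, 0, 1, 0],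
   ![0, 0, -1, 0, 0, 0, 1, 0],
   ![0, 0, 1, 0, 0, 0, 0, 1],
   ![0, 0, -1, 0, 0, 0, 0, 1],
   ![0, 0, 0, 1, 0, 0, 1, 0],
   ![0, 0, 0, -1, 0, 0, 1, 0],
   ![0, 0, 0, 1, 0, 0, 0, 1],
   ![0, 0, 0, -1, 0, 0, 0, 1],
   ![0, 0, 0, 0, 1, 0, 1, 0],
   ![0, 0, 0, 0, -1, 0, 1, 0],
   ![0, 0, 0, 0, 1, 0, 0, 1],
   ![0, 0, 0, 0, -1, 0, 0, 1],
   ![0, 0, 0, 0, 0, 1, 1, 0],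
   ![0, 0, 0, 0, 0, -1, 1, 0],
   ![0, 0, 0, 0, 0, 1, 0, 1],
   ![0, 0, 0, 0, 0, -1, 0, 1],
   ![1/2, 1/2, 1/2, 1/2, 1/2, 1/2, 1/2, 1/2],
   ![1/2, 1/2, 1/2, 1/2, -1/2, -1/2, 1/2, 1/2],
   ![1/2, 1/2, 1/2, -1/2, 1/2, -1/2, 1/2, 1/2],
   ![1/2, 1/2, 1/2, -1/2, -1/2, 1/2, 1/2, 1/2],
   ![1/2, 1/2, -1/2, 1/2, 1/2, -1/2, 1/2, 1/2],
   ![1/2, 1/2, -1/2, 1/2, -1/2, 1/2, 1/2, 1/2],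
   ![1/2, 1/2, -1/2, -1/2, 1/2, 1/2, 1/2, 1/2],
   ![1/2, 1/2, -1/2, -1/2, -1/2, -1/2, 1/2, 1/2],
   ![1/2, -1/2, 1/2, 1/2, 1/2, -1/2, 1/2, 1/2],
   ![1/2, -1/2, 1/2, 1/2, -1/2, 1/2, 1/2, 1/2],
   ![1/2, -1/2, 1/2, -1/2, 1/2, 1/2, 1/2, 1/2],
   ![1/2, -1/2, 1/2, -1/2, -1/2, -1/2, 1/2, 1/2],
   ![1/2, -1/2, -1/2, 1/2, 1/2, 1/2, 1/2, 1/2],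
   ![1/2, -1/2, -1/2, 1/2, -1/2, -1/2, 1/2, 1/2],
   ![1/2, -1/2, -1/2, -1/2, 1/2, -1/2, 1/2, 1/2],
   ![1/2, -1/2, -1/2, -1/2, -1/2, 1/2, 1/2, 1/2],
   ![-1/2, 1/2, 1/2, 1/2, 1/2, -1/2, 1/2, 1/2],
   ![-1/2, 1/2, 1/2, 1/2, -1/2, 1/2, 1/2, 1/2],
   ![-1/2, 1/2, 1/2, -1/2, 1/2, 1/2, 1/2, 1/2],
   ![-1/2, 1/2, 1/2, -1/2, -1/2, -1/2, 1/2, 1/2],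
   ![-1/2, 1/2, -1/2, 1/2, 1/2, 1/2, 1/2, 1/2],
   ![-1/2, 1/2, -1/2, 1/2, -1/2, -1/2, 1/2, 1/2],
   ![-1/2, 1/2, -1/2, -1/2, 1/2, -1/2, 1/2, 1/2],
   ![-1/2, 1/2, -1/2, -1/2, -1/2, 1/2, 1/2, 1/2],
   ![-1/2, -1/2, 1/2, 1/2, 1/2, 1/2, 1/2, 1/2],
   ![-1/2, -1/2, 1/2, 1/2, -1/2, -1/2, 1/2, 1/2],
   ![-1/2, -1/2, 1/2, -1/2, 1/2, -1/2, 1/2, 1/2],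
   ![-1/2, -1/2, 1/2, -1/2, -1/2, 1/2, 1/2, 1/2],
   ![-1/2, -1/2, -1/2, 1/2, 1/2, -1/2, 1/2, 1/2],
   ![-1/2, -1/2, -1/2, 1/2, -1/2, 1/2, 1/2, 1/2],
   ![-1/2, -1/2, -1/2, -1/2, 1/2, 1/2, 1/2, 1/2],
   ![-1/2, -1/2, -1/2, -1/2, -1/2, -1/2, 1/2, 1/2]]

def Madj : Nat := 456387250769132679864838372138956522313533368570434166393451358323579870526593512502491048861982025932190879306944346598623748116923030997013976589702511258082535984299623681348561217823033368537186836803810491419259266308968224113573419790808548152852846773828302351319195323538310288677565187840076690331617395099934743376001210289056941383769427118514674974206535720416147622437606308548882883587114803076084025019446713618243978959186020131283395673244999009644575054107256045774424352474620139956619532658110656858853108719252527826016467477507501282865059829387872663030738709012152283751279616497508230880018758198190422481121219326522339713295280953871992173563697586049460671545022240104142990475917804876398420445822113170985217247086532472620122973746151983726168560495847521004595307745708233360779555953332102064584361411137658324042872687760931505016639095392184475733016629710475917263832324050717609480200289037365661758442690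


/-- coordinates of `v` in the simple-root basis (the inverse matrix). -/
def coordsOf (v : V8) : Fin 8 → ℚ :=
  ![2 * v 7,
    (v 0 + v 1 + v 2 + v 3 + v 4 + v 5 + v 6 + 5 * v 7) / 2,
    (-v 0 + v 1 + v 2 + v 3 + v 4 + v 5 + v 6 + 7 * v 7) / 2,
    v 2 + v 3 + v 4 + v 5 + v 6 + 5 * v 7,
    v 3 + v 4 + v 5 + v 6 + 4 * v 7,
    v 4 + v 5 + v 6 + 3 * v 7,
    v 5 + v 6 + 2 * v 7,
    v 6 + v 7]

lemma nip_zero {x y : V8} : nip x y = 0 ↔ stdInner x y = 0 := by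
  unfold nip
  rw [div_eq_zero_iff]
  norm_num

lemma phi_simpleRoot : ∀ i : Fin 8, simpleRoot i 6 + simpleRoot i 7 = if i = 7 then 1 else 0 := by
  with_unfolding_all decide

lemma c7_eq {v : V8} {c : Fin 8 → ℚ} (h : HasCoords v c) : c 7 = v 6 + v 7 := by
  have h6 := congrFun h 6
  have h7 := congrFun h 7
  have e : v 6 + v 7 = ∑ i, (c i * simpleRoot i 6 + c i * simpleRoot i 7) := by
    rw [h6, h7]
    simp [Finset.sum_apply, Finset.sum_add_distrib]
  rw [e]
  have : ∀ i ∈ (univ : Finset (Fin 8)),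
      c i * simpleRoot i 6 + c i * simpleRoot i 7 = if i = 7 then c i else 0 := by
    intro i _
    rw [← mul_add, phi_simpleRoot i]
    split <;> ring
  rw [Finset.sum_congr rfl this, Finset.sum_ite_eq' univ 7 c]
  simp

/-- integer-type candidate vector -/
def ivec (sa sb : Bool) (i j : Fin 8) : V8 :=
  fun k => if k = i then (if sa then 1 else -1) else if k = j then (if sb then 1 else -1) else 0

/-- half-type candidate vector -/
def hvec (B : Finset (Fin 8)) : V8 := fun k => if k ∈ B then -(1/2) else 1/2

lemma key_int : ∀ (sa sb : Bool) (i j : Fin 8), i ≠ j →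
    ivec sa sb i j 6 + ivec sa sb i j 7 = 1 → ivec sa sb i j ∈ wts := by
  with_unfolding_all decide

lemma key_half : ∀ B : Finset (Fin 8), hvec B 6 + hvec B 7 = 1 →
    (∑ i, hvec B i = -2 ∨ ∑ i, hvec B i = 0 ∨ ∑ i, hvec B i = 2 ∨ ∑ i, hvec B i = 4) →
    hvec B ∈ wts := by
  with_unfolding_all decide

lemma lambda_sub {v : V8} (hv : v ∈ LambdaE7) : v ∈ wts := by
  obtain ⟨⟨hnorm, hint, hpar⟩, c, hc, hc7⟩ := hv
  have hL : v 6 + v 7 = 1 := (c7_eq hc).symm.trans hc7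
  have h2 : ∑ i, v i * v i = 2 := hnorm
  have hsq : ∀ i, v i * v i ≤ 2 := by
    intro i
    rw [← h2]
    exact Finset.single_le_sum (f := fun j => v j * v j)
      (fun j _ => mul_self_nonneg (v j)) (Finset.mem_univ i)
  rcases hint with hint | hhalf
  · -- integer case
    have tri : ∀ i, v i = -1 ∨ v i = 0 ∨ v i = 1 := by
      intro i
      obtain ⟨m, hm⟩ := hint i
      have h1 : (m : ℚ) * m ≤ 2 := by rw [← hm]; exact hsq i
      have h2' : m * m ≤ 2 := by exact_mod_cast h1
      have hlb : -1 ≤ m := by nlinarith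
      have hub : m ≤ 1 := by nlinarith
      interval_cases m <;> rw [hm] <;> norm_num
    have hb : ∀ i ∈ (univ : Finset (Fin 8)), v i * v i = if v i ≠ 0 then (1:ℚ) else 0 := by
      intro i _
      rcases tri i with h | h | h <;> rw [h] <;> norm_num
    have hcard : (univ.filter fun i => v i ≠ 0).card = 2 := by
      have h3 := h2
      rw [Finset.sum_congr rfl hb, Finset.sum_boole] at h3
      exact_mod_cast h3
    obtain ⟨i, j, hij, hset⟩ := Finset.card_eq_two.mp hcard
    have hmem : ∀ k, v k ≠ 0 ↔ (k = i ∨ k = j) := by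
      intro k
      have : k ∈ univ.filter (fun i => v i ≠ 0) ↔ k ∈ ({i, j} : Finset (Fin 8)) := by rw [hset]
      simpa using this
    have hzero : ∀ k, k ≠ i → k ≠ j → v k = 0 := by
      intro k hki hkj
      by_contra hk
      rcases (hmem k).mp hk with h | h
      · exact hki h
      · exact hkj h
    have hvi : v i = -1 ∨ v i = 1 := by
      have hi0 : v i ≠ 0 := (hmem i).mpr (Or.inl rfl)
      rcases tri i with h | h | h
      · exact Or.inl h
      · exact absurd h hi0
      · exact Or.inr h
    have hvj : v j = -1 ∨ v j = 1 := by
      have hj0 : v j ≠ 0 := (hmem j).mpr (Or.inr rfl)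
      rcases tri j with h | h | h
      · exact Or.inl h
      · exact absurd h hj0
      · exact Or.inr h
    have hveq : v = ivec (decide (v i = 1)) (decide (v j = 1)) i j := by
      funext k
      unfold ivec
      by_cases hki : k = i
      · subst hki
        rcases hvi with h | h <;> rw [h] <;> simp <;> norm_num
      · by_cases hkj : k = j
        · subst hkj
          rcases hvj with h | h <;> rw [h] <;> simp [hki] <;> norm_num
        · simp [hki, hkj, hzero k hki hkj]
    rw [hveq]
    exact key_int _ _ i j hij (by rw [← hveq]; exact hL)
  · -- half-integer case
    have lb : ∀ i, 1/4 ≤ v i * v i := by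
      intro i
      obtain ⟨m, hm⟩ := hhalf i
      rcases le_or_gt 0 m with h | h
      · have h' : (0 : ℚ) ≤ m := by exact_mod_cast h
        rw [hm]; nlinarith
      · have h' : (m : ℚ) ≤ -1 := by exact_mod_cast (by omega : m ≤ -1)
        rw [hm]; nlinarith
    have ub : ∀ i, v i * v i ≤ 1/4 := by
      intro i
      have hsplit : v i * v i + ∑ k ∈ univ.erase i, v k * v k = 2 := by
        rw [← h2]
        exact Finset.add_sum_erase univ (fun k => v k * v k) (Finset.mem_univ i)
      have hcard7 : (univ.erase i).card = 7 := by
        rw [Finset.card_erase_of_mem (Finset.mem_univ i)]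
        simp
      have hge := Finset.card_nsmul_le_sum (univ.erase i) (fun k => v k * v k) (1/4 : ℚ)
        (fun k _ => lb k)
      rw [hcard7] at hge
      have hge' : (7 : ℚ)/4 ≤ ∑ k ∈ univ.erase i, v k * v k := by
        have : ((7 : ℕ) : ℚ) * (1/4) = 7/4 := by norm_num
        rw [nsmul_eq_mul] at hge
        linarith [hge]
      linarith
    have hpm : ∀ i, v i = -(1/2) ∨ v i = 1/2 := by
      intro i
      have h14 : v i * v i = 1/4 := le_antisymm (ub i) (lb i)
      have hz : (v i - 1/2) * (v i + 1/2) = 0 := by nlinarith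
      rcases mul_eq_zero.mp hz with h | h
      · right; linarith
      · left; linarith
    obtain ⟨n, hn⟩ := hpar
    have hub4 : ∑ i, v i ≤ 4 := by
      have h8 := Finset.sum_le_card_nsmul (univ : Finset (Fin 8)) v (1/2 : ℚ) (fun k _ => by
        rcases hpm k with h | h <;> rw [h] <;> norm_num)
      simp at h8
      linarith [h8]
    have hlb2 : (-2 : ℚ) ≤ ∑ i, v i := by
      have bi : ∀ i, -(1/2) ≤ v i := by
        intro i
        rcases hpm i with h | h <;> rw [h] <;> norm_num
      rw [Fin.sum_univ_eight]
      linarith [bi 0, bi 1, bi 2, bi 3, bi 4, bi 5, hL]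
    have hn2 : -1 ≤ n ∧ n ≤ 2 := by
      constructor
      · have : (-1 : ℚ) ≤ n := by rw [hn] at hlb2; linarith
        exact_mod_cast this
      · have : (n : ℚ) ≤ 2 := by rw [hn] at hub4; linarith
        exact_mod_cast this
    have hdisj : ∑ i, v i = -2 ∨ ∑ i, v i = 0 ∨ ∑ i, v i = 2 ∨ ∑ i, v i = 4 := by
      obtain ⟨hn1, hn2⟩ := hn2
      interval_cases n <;> rw [hn] <;> norm_num
    set B := univ.filter (fun k => v k = -(1/2)) with hB
    have hveq : v = hvec B := by
      funext k
      unfold hvec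
      by_cases hk : k ∈ B
      · rw [hB, Finset.mem_filter] at hk
        rw [if_pos (by rw [hB, Finset.mem_filter]; exact hk), hk.2]
      · rcases hpm k with h | h
        · exact absurd (by rw [hB, Finset.mem_filter]; exact ⟨Finset.mem_univ k, h⟩) hk
        · rw [if_neg hk, h]
    have hL' : hvec B 6 + hvec B 7 = 1 := by rw [← hveq]; exact hL
    have hd' : ∑ i, hvec B i = -2 ∨ ∑ i, hvec B i = 0 ∨ ∑ i, hvec B i = 2 ∨ ∑ i, hvec B i = 4 := by
      rw [← hveq]
      exact hdisj
    rw [hveq]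
    exact key_half B hL' hd'

lemma wts_root : ∀ v ∈ wts, stdInner v v = 2 ∧
    ((∀ i, v i = -1 ∨ v i = 0 ∨ v i = 1) ∨ (∀ i, v i = -(1/2) ∨ v i = 1/2)) ∧
    (∑ i, v i = -2 ∨ ∑ i, v i = 0 ∨ ∑ i, v i = 2 ∨ ∑ i, v i = 4) ∧
    (v = ∑ i, coordsOf v i • simpleRoot i) ∧ coordsOf v 7 = 1 := by
  with_unfolding_all decide

lemma wts_sub {v : V8} (h : v ∈ wts) : v ∈ LambdaE7 := by
  obtain ⟨h2, hcoord, hsum, hhc, h7⟩ := wts_root v h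
  refine ⟨⟨h2, ?_, ?_⟩, coordsOf v, hhc, h7⟩
  · rcases hcoord with h | h
    · left
      intro i
      rcases h i with h' | h' | h'
      · exact ⟨-1, by rw [h']; norm_num⟩
      · exact ⟨0, by rw [h']; norm_num⟩
      · exact ⟨1, by rw [h']; norm_num⟩
    · right
      intro i
      rcases h i with h' | h'
      · exact ⟨-1, by rw [h']; norm_num⟩
      · exact ⟨0, by rw [h']; norm_num⟩
  · rcases hsum with h | h | h | h
    · exact ⟨-1, by rw [h]; norm_num⟩
    · exact ⟨0, by rw [h]; norm_num⟩
    · exact ⟨1, by rw [h]; norm_num⟩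
    · exact ⟨2, by rw [h]; norm_num⟩

lemma wts_len : wts.length = 56 := by with_unfolding_all rfl

def wt (i : Fin 56) : V8 := wts.get (Fin.cast wts_len.symm i)

lemma wts_nodup : wts.Nodup := by with_unfolding_all decide

lemma wt_inj : Function.Injective wt := by
  intro a b h
  have := List.nodup_iff_injective_get.mp wts_nodup h
  exact Fin.cast_injective _ this

lemma range_wt : ∀ v, v ∈ LambdaE7 ↔ ∃ i, wt i = v := by
  intro v
  constructor
  · intro hv
    obtain ⟨n, hn⟩ := List.mem_iff_get.mp (lambda_sub hv)
    exact ⟨Fin.cast wts_len n, hn⟩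
  · rintro ⟨i, rfl⟩
    exact wts_sub (List.get_mem wts (Fin.cast wts_len.symm i))

def adjb (i j : Nat) : Bool := Madj.testBit (56 * i + j)

def row (x : Nat) : Nat := (Madj >>> (56 * x)) &&& (2 ^ 56 - 1)

def onebit : Nat → Bool
  | 0 => false
  | (t+1) => (t+1) &&& t == 0

def sLoop : Nat → Nat → Nat → Nat → Bool
  | 0, _, _, _ => true
  | s+1, r, ri, rr =>
    (!(ri.testBit s && rr.testBit s && !(s == r)) || onebit (ri &&& rr &&& row s))
      && sLoop s r ri rr

def rLoop : Nat → Nat → Bool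
  | 0, _ => true
  | r+1, ri => (!(ri.testBit r) || sLoop 56 r ri (row r)) && rLoop r ri

def iLoop : Nat → Bool
  | 0 => true
  | i+1 => rLoop 56 (row i) && iLoop i

lemma bigLoop : iLoop 56 = true := by decide

lemma hadj : ∀ i j : Fin 56, adjb i.val j.val = decide (stdInner (wt i) (wt j) = 0) := by
  with_unfolding_all decide

lemma adj_iff (i j : Fin 56) : adjb i.val j.val = true ↔ nip (wt i) (wt j) = 0 := by
  rw [hadj i j, decide_eq_true_iff]
  exact nip_zero.symm

lemma main1 : ∀ i : Fin 56,
    ((univ : Finset (Fin 56)).filter fun j => adjb i.val j.val = true).card = 27 := by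
  decide

lemma row_testBit (x t : ℕ) (ht : t < 56) : (row x).testBit t = Madj.testBit (56 * x + t) := by
  simp only [row]
  rw [Nat.testBit_and, Nat.testBit_shiftRight, Nat.testBit_two_pow_sub_one]
  simp [ht]

lemma row_lt (x : ℕ) : row x < 2 ^ 56 :=
  Nat.and_lt_two_pow _ (by norm_num)

lemma onebit_sound (T : ℕ) (h : onebit T = true) : T ≠ 0 ∧ T &&& (T - 1) = 0 := by
  cases T with
  | zero => simp [onebit] at h
  | succ t =>
    refine ⟨Nat.succ_ne_zero t, ?_⟩
    simp only [onebit] at h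
    have h2 : (t + 1) &&& t = 0 := by simpa using h
    simpa [Nat.succ_sub_one] using h2

lemma sLoop_sound : ∀ (f r ri rr : ℕ), sLoop f r ri rr = true →
    ∀ s, s < f → ri.testBit s = true → rr.testBit s = true → s ≠ r →
    onebit (ri &&& rr &&& row s) = true := by
  intro f
  induction f with
  | zero =>
    intro r ri rr _ s hs _ _ _
    exact absurd hs (Nat.not_lt_zero s)
  | succ f ih =>
    intro r ri rr h s hs h1 h2 h3
    simp only [sLoop, Bool.and_eq_true, Bool.or_eq_true] at h
    by_cases hsf : s = f
    · subst hsf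
      rcases h.1 with hng | hob
      · exfalso
        rw [h1, h2] at hng
        simp at hng
        exact h3 hng
      · exact hob
    · exact ih r ri rr h.2 s (by omega) h1 h2 h3

lemma rLoop_sound : ∀ (f ri : ℕ), rLoop f ri = true →
    ∀ r, r < f → ri.testBit r = true → sLoop 56 r ri (row r) = true := by
  intro f
  induction f with
  | zero =>
    intro ri _ r hr _
    exact absurd hr (Nat.not_lt_zero r)
  | succ f ih =>
    intro ri h r hr h1
    simp only [rLoop, Bool.and_eq_true, Bool.or_eq_true] at h
    by_cases hrf : r = f
    · subst hrf
      rcases h.1 with hng | hok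
      · rw [h1] at hng; simp at hng
      · exact hok
    · exact ih ri h.2 r (by omega) h1

lemma iLoop_sound : ∀ (f : ℕ), iLoop f = true →
    ∀ i, i < f → rLoop 56 (row i) = true := by
  intro f
  induction f with
  | zero =>
    intro _ i hi
    exact absurd hi (Nat.not_lt_zero i)
  | succ f ih =>
    intro h i hi
    simp only [iLoop, Bool.and_eq_true] at h
    by_cases hif : i = f
    · subst hif; exact h.1
    · exact ih h.2 i (by omega)

lemma pow_of_and_pred : ∀ T : ℕ, T ≠ 0 → T &&& (T - 1) = 0 → ∃ k, T = 2 ^ k := by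
  intro T
  induction T using Nat.strong_induction_on with
  | _ T ih =>
    intro h0 h1
    rcases Nat.even_or_odd T with he | ho
    · obtain ⟨m, hm⟩ := he
      have hm0 : m ≠ 0 := by omega
      have hmm : m &&& (m - 1) = 0 := by
        apply Nat.eq_of_testBit_eq
        intro i
        have hb := congrArg (fun x => Nat.testBit x (i + 1)) h1
        simp only [Nat.testBit_and, Nat.zero_testBit] at hb
        have e1 : T / 2 = m := by omega
        have e2 : (T - 1) / 2 = m - 1 := by omega
        rw [Nat.testBit_add_one, Nat.testBit_add_one, e1, e2] at hb
        simp only [Nat.testBit_and, Nat.zero_testBit]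
        exact hb
      obtain ⟨k, hk⟩ := ih m (by omega) hm0 hmm
      refine ⟨k + 1, ?_⟩
      rw [pow_succ]
      omega
    · obtain ⟨m, hm⟩ := ho
      by_cases hT1 : T = 1
      · exact ⟨0, by simp [hT1]⟩
      · exfalso
        have hne : T - 1 ≠ 0 := by omega
        obtain ⟨i, hi⟩ := Nat.exists_testBit_of_ne_zero hne
        have hi0 : i ≠ 0 := by
          rintro rfl
          rw [Nat.testBit_zero] at hi
          simp only [decide_eq_true_eq] at hi
          omega
        obtain ⟨j, rfl⟩ := Nat.exists_eq_succ_of_ne_zero hi0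
        have hTb : T.testBit (j + 1) = true := by
          rw [Nat.testBit_add_one] at hi ⊢
          have e : T / 2 = (T - 1) / 2 := by omega
          rw [e]
          exact hi
        have hb := congrArg (fun x => Nat.testBit x (j + 1)) h1
        simp only [Nat.testBit_and, Nat.zero_testBit] at hb
        simp [hTb, hi] at hb

lemma card_single_bit {T : ℕ} (hlt : T < 2 ^ 56) (h0 : T ≠ 0) (h1 : T &&& (T - 1) = 0) :
    ((univ : Finset (Fin 56)).filter fun t => T.testBit t.val = true).card = 1 := by
  obtain ⟨k, rfl⟩ := pow_of_and_pred T h0 h1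
  have hk : k < 56 := by
    by_contra hc
    have : (2 : ℕ) ^ 56 ≤ 2 ^ k := Nat.pow_le_pow_right (by norm_num) (by omega)
    omega
  have hset : ((univ : Finset (Fin 56)).filter fun t => (2 ^ k).testBit t.val = true)
      = {⟨k, hk⟩} := by
    ext t
    simp only [Finset.mem_filter, Finset.mem_univ, true_and, Finset.mem_singleton,
      Nat.testBit_two_pow, decide_eq_true_eq]
    constructor
    · intro h
      exact Fin.ext h.symm
    · intro h
      rw [h]
  rw [hset, Finset.card_singleton]

lemma main2 : ∀ i r s : Fin 56, adjb i.val r.val = true → adjb i.val s.val = true →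
    r ≠ s → adjb r.val s.val = true →
    ((univ : Finset (Fin 56)).filter fun t =>
      adjb i.val t.val && adjb r.val t.val && adjb s.val t.val).card = 1 := by
  intro i r s hir his hrs hrs'
  have h1 : rLoop 56 (row i.val) = true := iLoop_sound 56 bigLoop i.val i.isLt
  have h2 : sLoop 56 r.val (row i.val) (row r.val) = true :=
    rLoop_sound 56 (row i.val) h1 r.val r.isLt
      (by rw [row_testBit _ _ r.isLt]; exact hir)
  have h3 : onebit (row i.val &&& row r.val &&& row s.val) = true :=
    sLoop_sound 56 r.val (row i.val) (row r.val) h2 s.val s.isLt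
      (by rw [row_testBit _ _ s.isLt]; exact his)
      (by rw [row_testBit _ _ s.isLt]; exact hrs')
      (fun h => hrs (Fin.val_injective h.symm))
  obtain ⟨hne, hzero⟩ := onebit_sound _ h3
  have hlt : row i.val &&& row r.val &&& row s.val < 2 ^ 56 :=
    Nat.and_lt_two_pow _ (row_lt s.val)
  have hcard := card_single_bit hlt hne hzero
  have hfeq : ((univ : Finset (Fin 56)).filter fun t =>
        adjb i.val t.val && adjb r.val t.val && adjb s.val t.val)
      = ((univ : Finset (Fin 56)).filter fun t =>
        (row i.val &&& row r.val &&& row s.val).testBit t.val = true) := by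
    apply Finset.filter_congr
    intro t _
    have hp : (adjb i.val t.val && adjb r.val t.val && adjb s.val t.val)
        = (row i.val &&& row r.val &&& row s.val).testBit t.val := by
      simp only [Nat.testBit_and, row_testBit _ _ t.isLt]
      rfl
    rw [hp]
  rw [hfeq]
  exact hcard

/-- for λ ∈ Λ, the set {λ}^⊥ of weights of Λ orthogonal to λ has 27
elements, and for any two distinct orthogonal ρ, σ ∈ {λ}^⊥ there is exactly one
τ ∈ {λ}^⊥ orthogonal to both ρ and σ. -/
theorem perp_triads :
    ∀ l ∈ LambdaE7,
      {m | m ∈ LambdaE7 ∧ nip l m = 0}.ncard = 27 ∧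
      ∀ r ∈ {m | m ∈ LambdaE7 ∧ nip l m = 0},
        ∀ s ∈ {m | m ∈ LambdaE7 ∧ nip l m = 0},
          r ≠ s → nip r s = 0 →
            ∃! t, t ∈ {m | m ∈ LambdaE7 ∧ nip l m = 0} ∧ nip r t = 0 ∧ nip s t = 0 := by
  intro l hl
  obtain ⟨i, rfl⟩ := (range_wt l).mp hl
  have hset : ∀ a : Fin 56, {m | m ∈ LambdaE7 ∧ nip (wt a) m = 0}
      = wt '' {j : Fin 56 | adjb a.val j.val = true} := by
    intro a
    ext m
    simp only [Set.mem_setOf_eq, Set.mem_image]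
    constructor
    · rintro ⟨hm, hm0⟩
      obtain ⟨j, rfl⟩ := (range_wt m).mp hm
      exact ⟨j, (adj_iff a j).mpr hm0, rfl⟩
    · rintro ⟨j, hj, rfl⟩
      exact ⟨(range_wt _).mpr ⟨j, rfl⟩, (adj_iff a j).mp hj⟩
  constructor
  · rw [hset i, Set.ncard_image_of_injective _ wt_inj]
    have hceq : {j : Fin 56 | adjb i.val j.val = true}
        = ↑((univ : Finset (Fin 56)).filter fun j => adjb i.val j.val = true) := by
      ext j; simp
    rw [hceq, Set.ncard_coe_finset]
    exact main1 i
  · intro r hr s hs hrs hrs0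
    obtain ⟨hrl, hr0⟩ := hr
    obtain ⟨hsl, hs0⟩ := hs
    obtain ⟨a, rfl⟩ := (range_wt r).mp hrl
    obtain ⟨b, rfl⟩ := (range_wt s).mp hsl
    have hab : a ≠ b := fun h => hrs (by rw [h])
    have hcard := main2 i a b ((adj_iff i a).mpr hr0) ((adj_iff i b).mpr hs0) hab
      ((adj_iff a b).mpr hrs0)
    obtain ⟨c0, hc0⟩ := Finset.card_eq_one.mp hcard
    have hc0mem : c0 ∈ (univ : Finset (Fin 56)).filter (fun t =>
        adjb i.val t.val && adjb a.val t.val && adjb b.val t.val) := by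
      rw [hc0]; exact Finset.mem_singleton_self c0
    rw [Finset.mem_filter] at hc0mem
    have hbools := hc0mem.2
    rw [Bool.and_eq_true, Bool.and_eq_true] at hbools
    obtain ⟨⟨hit, hat⟩, hbt⟩ := hbools
    refine ⟨wt c0, ⟨⟨(range_wt _).mpr ⟨c0, rfl⟩, (adj_iff i c0).mp hit⟩,
      (adj_iff a c0).mp hat, (adj_iff b c0).mp hbt⟩, ?_⟩
    rintro y ⟨⟨hyl, hy0⟩, hya, hyb⟩
    obtain ⟨d, rfl⟩ := (range_wt y).mp hyl
    have hdmem : d ∈ (univ : Finset (Fin 56)).filter (fun t =>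
        adjb i.val t.val && adjb a.val t.val && adjb b.val t.val) := by
      rw [Finset.mem_filter]
      refine ⟨Finset.mem_univ d, ?_⟩
      rw [Bool.and_eq_true, Bool.and_eq_true]
      exact ⟨⟨(adj_iff i d).mpr hy0, (adj_iff a d).mpr hya⟩, (adj_iff b d).mpr hyb⟩
    rw [hc0] at hdmem
    rw [Finset.mem_singleton] at hdmem
    rw [hdmem]
end

section
/- Let Φ be the root system E₇ embedded in E₈ as the roots of α₈-coefficient 0, Λ the roots of α₈-coefficient 1, and δ the highest root of E₈. For a root α ∈ Φ, each pair of orthogonal weights {λ, μ} ⊆ Ω(α) with λ + μ = δ + α satisfies: for any root γ ∈ Φ with (α,γ) = −1 or −1/2 (length-1 normalization), neither (λ,γ) nor (μ,γ) equals 1/2. -/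
open Finset

lemma stdInner_comm (x y : V8) : stdInner x y = stdInner y x := by
  simp [stdInner, mul_comm]

lemma stdInner_sub_left (x y z : V8) : stdInner (x - y) z = stdInner x z - stdInner y z := by
  simp [stdInner, sub_mul, Finset.sum_sub_distrib]

lemma stdInner_add_left (x y z : V8) : stdInner (x + y) z = stdInner x z + stdInner y z := by
  simp [stdInner, add_mul, Finset.sum_add_distrib]

lemma stdInner_sub_right (x y z : V8) : stdInner x (y - z) = stdInner x y - stdInner x z := by
  simp [stdInner, mul_sub, Finset.sum_sub_distrib]

lemma stdInner_add_right (x y z : V8) : stdInner x (y + z) = stdInner x y + stdInner x z := by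
  simp [stdInner, mul_add, Finset.sum_add_distrib]

lemma stdInner_neg_left (x y : V8) : stdInner (-x) y = -stdInner x y := by
  simp [stdInner, neg_mul, Finset.sum_neg_distrib]

lemma stdInner_neg_right (x y : V8) : stdInner x (-y) = -stdInner x y := by
  simp [stdInner, mul_neg, Finset.sum_neg_distrib]

lemma stdInner_self_eq_zero {x : V8} (h : stdInner x x = 0) : x = 0 := by
  funext i
  have h2 : ∑ j, x j * x j = 0 := h
  have := (Finset.sum_eq_zero_iff_of_nonneg (fun j _ => mul_self_nonneg (x j))).mp h2 i
    (Finset.mem_univ i)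
  exact mul_self_eq_zero.mp this

/-- If x, y have squared length 2 and inner product −2, then y = −x. -/
lemma eq_neg_of_inner {x y : V8} (hx : stdInner x x = 2) (hy : stdInner y y = 2)
    (hxy : stdInner x y = -2) : y = -x := by
  have h0 : stdInner (x + y) (x + y) = 0 := by
    rw [stdInner_add_left, stdInner_add_right, stdInner_add_right, stdInner_comm y x]
    linarith
  have := stdInner_self_eq_zero h0
  have : y = -x := by
    funext i
    have := congrFun this i
    simp [Pi.add_apply] at this ⊢
    linarith
  exact this

/-- The α₈-coefficient of v equals its standard inner product with δ. -/
lemma inner_delta_eq_coord {v : V8} {c : Fin 8 → ℚ} (h : HasCoords v c) :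
    stdInner v deltaE8 = c 7 := by
  rw [h]
  simp [stdInner, deltaE8, simpleRoot, Fin.sum_univ_succ, Finset.sum_apply, Pi.smul_apply,
    Matrix.cons_val_zero, Matrix.cons_val_one]
  have h7 : (Fin.succ 2).succ.succ.succ.succ = (7 : Fin 8) := by decide
  ring

lemma lambda_inner_delta {v : V8} (h : v ∈ LambdaE7) : stdInner v deltaE8 = 1 := by
  obtain ⟨_, c, hc, hc7⟩ := h
  rw [inner_delta_eq_coord hc, hc7]

lemma e7_inner_delta {v : V8} (h : v ∈ E7) : stdInner v deltaE8 = 0 := by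
  obtain ⟨_, c, hc, hc7⟩ := h
  rw [inner_delta_eq_coord hc, hc7]

/-- Key asymmetric lemma: under the hypotheses of the theorem, (λ,γ) ≠ 1/2. -/
lemma key_lemma {a l m g : V8} (ha : a ∈ E7) (hl : l ∈ Omega a) (hm : m ∈ Omega a)
    (hsum : l + m = deltaE8 + a) (hg : g ∈ E7)
    (hag : nip a g = -1 ∨ nip a g = -1/2) : nip l g ≠ 1/2 := by
  intro hlg
  have Aaa : stdInner a a = 2 := ha.1.1
  have All : stdInner l l = 2 := hl.1.1.1
  have Agg : stdInner g g = 2 := hg.1.1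
  have Alg : stdInner l g = 1 := by
    have : stdInner l g / 2 = 1/2 := hlg
    linarith
  -- (l, a) = 1
  have Ala : stdInner l a = 1 := by
    have h2 : stdInner (l - a) (l - a) = 2 := hl.2.1.1
    rw [stdInner_sub_left, stdInner_sub_right, stdInner_sub_right, stdInner_comm a l] at h2
    linarith
  have Agd : stdInner g deltaE8 = 0 := e7_inner_delta hg
  have Aad : stdInner a deltaE8 = 0 := e7_inner_delta ha
  have Amd : stdInner m deltaE8 = 1 := lambda_inner_delta hm.1
  have Amm : stdInner m m = 2 := hm.1.1.1
  -- m = δ + a - l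
  have hm' : m = deltaE8 + a - l := by
    rw [← hsum]; abel
  rcases hag with h1 | h2
  · -- (a,g) = -2 : g = -a, so (l,g) = -1 ≠ 1
    have Aag : stdInner a g = -2 := by
      have : stdInner a g / 2 = -1 := h1
      linarith
    have hga : g = -a := eq_neg_of_inner Aaa Agg Aag
    rw [hga, stdInner_neg_right] at Alg
    linarith
  · -- (a,g) = -1 : then (m,g) = -2, so g = -m, contradicting (g,δ)=0
    have Aag : stdInner a g = -1 := by
      have : stdInner a g / 2 = -1/2 := h2
      linarith
    have Adg : stdInner deltaE8 g = 0 := by rw [stdInner_comm]; exact Agd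
    have Amg : stdInner m g = -2 := by
      rw [hm', stdInner_sub_left, stdInner_add_left]
      linarith
    have hgm : g = -m := eq_neg_of_inner Amm Agg Amg
    rw [hgm, stdInner_neg_left, Amd] at Agd
    linarith

/-- for a root α of E₇ and a pair of orthogonal weights {λ,μ} ⊆ Ω(α)
with λ + μ = δ + α, any root γ of E₇ with (α,γ) = −1 or −1/2 satisfies
(λ,γ) ≠ 1/2 and (μ,γ) ≠ 1/2. -/
theorem omega_pair_no_shift :
    ∀ a ∈ E7, ∀ l ∈ Omega a, ∀ m ∈ Omega a,
      nip l m = 0 → l + m = deltaE8 + a →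
        ∀ g ∈ E7, (nip a g = -1 ∨ nip a g = -1/2) →
          nip l g ≠ 1/2 ∧ nip m g ≠ 1/2 := by
  intro a ha l hl m hm _ hsum g hg hag
  refine ⟨key_lemma ha hl hm hsum hg hag, key_lemma ha hm hl ?_ hg hag⟩
  rw [← hsum]; abel
end
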